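/- Under the stated CTMDP assumptions, there exist a real number g* and a function h : S → ℝ, together with a selector f* (i.e., f*(i) ∈ A(i) for every i ∈ S), such that for every i ∈ S: λ·g*·e^{λh(i)} = inf_{a ∈ A(i)} { λ·c(i,a)·e^{λh(i)} + Σ_{j∈S} e^{λh(j)}·q(j|i,a) }, and the infimum is attained at a = f*(i). (Risk-sensitive average cost optimality equation, existence part of Theorem 3.2(a).) -/

import Mathlib

open Finset

noncomputable def Lop {S : Type*} [Fintype S] {A : S → Type*}
    (r : ∀ i : S, A i → S → ℝ) (v : S → ℝ) (i : S) (a : A i) : ℝ :=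
  ∑ j, r i a j * v j

noncomputable def Top' {S : Type*} [Fintype S] {A : S → Type*} [∀ i, TopologicalSpace (A i)]
    (r : ∀ i : S, A i → S → ℝ) (v : S → ℝ) (i : S) : ℝ :=
  ⨅ a : A i, Lop r v i a

private lemma exists_min' {B : Type*} [TopologicalSpace B] [CompactSpace B] [Nonempty B]
    {f : B → ℝ} (hf : Continuous f) : ∃ a, ∀ b, f a ≤ f b := by
  obtain ⟨a, -, ha⟩ := isCompact_univ.exists_isMinOn Set.univ_nonempty hf.continuousOn
  exact ⟨a, fun b => ha (Set.mem_univ b)⟩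

section Eigen

variable {S : Type*} [Fintype S] [DecidableEq S] [Nonempty S]
variable {A : S → Type*} [∀ i, TopologicalSpace (A i)] [∀ i, CompactSpace (A i)]
  [∀ i, Nonempty (A i)]

theorem exists_eigen (r : ∀ i : S, A i → S → ℝ)
    (hcont : ∀ i j, Continuous fun a => r i a j)
    (hnn : ∀ i (a : A i) j, 0 ≤ r i a j)
    (hdiag : ∀ i (a : A i), 1 ≤ r i a i)
    (hirr : ∀ (f : ∀ i, A i) (Z : Set S), Z.Nonempty → Zᶜ.Nonempty →
      ∃ i ∈ Z, ∃ j, j ∉ Z ∧ 0 < r i (f i) j) :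
    ∃ (ρ : ℝ) (v : S → ℝ) (fs : ∀ i, A i), 1 ≤ ρ ∧ (∀ i, 0 < v i) ∧
      ∀ i, (∀ a, Lop r v i (fs i) ≤ Lop r v i a) ∧ Lop r v i (fs i) = ρ * v i := by
  classical
  -- continuity of Lop in the action
  have hLcont : ∀ (v : S → ℝ) (i : S), Continuous fun a : A i => Lop r v i a := by
    intro v i
    exact continuous_finset_sum _ fun j _ => (hcont i j).mul continuous_const
  -- minimizing selector
  have hminex : ∀ (v : S → ℝ) (i : S), ∃ a : A i, ∀ b, Lop r v i a ≤ Lop r v i b :=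
    fun v i => exists_min' (hLcont v i)
  choose sel hsel using hminex
  have hbdd : ∀ (v : S → ℝ) (i : S), BddBelow (Set.range fun a : A i => Lop r v i a) :=
    fun v i => ⟨Lop r v i (sel v i), by rintro x ⟨b, rfl⟩; exact hsel v i b⟩
  have hT_le : ∀ (v : S → ℝ) (i : S) (a : A i), Top' r v i ≤ Lop r v i a :=
    fun v i a => ciInf_le (hbdd v i) a
  have hT_eq : ∀ (v : S → ℝ) (i : S), Top' r v i = Lop r v i (sel v i) :=
    fun v i => le_antisymm (hT_le v i _) (le_ciInf (hsel v i))
  have hle_T : ∀ (v : S → ℝ) (i : S) (x : ℝ), (∀ a, x ≤ Lop r v i a) → x ≤ Top' r v i :=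
    fun v i x h => le_ciInf h
  -- monotonicity
  have hLmono : ∀ {v w : S → ℝ}, (∀ j, v j ≤ w j) → ∀ (i : S) (a : A i),
      Lop r v i a ≤ Lop r w i a := by
    intro v w hvw i a
    exact Finset.sum_le_sum fun j _ => mul_le_mul_of_nonneg_left (hvw j) (hnn i a j)
  have hTmono : ∀ {v w : S → ℝ}, (∀ j, v j ≤ w j) → ∀ i, Top' r v i ≤ Top' r w i := by
    intro v w hvw i
    calc Top' r v i ≤ Lop r v i (sel w i) := hT_le v i _
    _ ≤ Lop r w i (sel w i) := hLmono hvw i _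
    _ = Top' r w i := (hT_eq w i).symm
  -- homogeneity
  have hLsmul : ∀ (s : ℝ) (v : S → ℝ) (i : S) (a : A i),
      Lop r (fun j => s * v j) i a = s * Lop r v i a := by
    intro s v i a
    simp [Lop, Finset.mul_sum, mul_left_comm]
  have hThom : ∀ (s : ℝ), 0 ≤ s → ∀ (v : S → ℝ) (i : S),
      Top' r (fun j => s * v j) i = s * Top' r v i := by
    intro s hs v i
    refine le_antisymm ?_ ?_
    · calc Top' r (fun j => s * v j) i ≤ Lop r (fun j => s * v j) i (sel v i) :=
        hT_le _ i _
      _ = s * Lop r v i (sel v i) := hLsmul s v i _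
      _ = s * Top' r v i := by rw [hT_eq]
    · calc s * Top' r v i ≤ s * Lop r v i (sel (fun j => s * v j) i) :=
        mul_le_mul_of_nonneg_left (hT_le v i _) hs
      _ = Lop r (fun j => s * v j) i _ := (hLsmul s v i _).symm
      _ = Top' r (fun j => s * v j) i := (hT_eq _ i).symm
  -- nonnegativity and expansiveness
  have hLnonneg : ∀ (v : S → ℝ), (∀ j, 0 ≤ v j) → ∀ (i : S) (a : A i), 0 ≤ Lop r v i a :=
    fun v hv i a => Finset.sum_nonneg fun j _ => mul_nonneg (hnn i a j) (hv j)
  have hLdiag : ∀ (v : S → ℝ), (∀ j, 0 ≤ v j) → ∀ (i : S) (a : A i),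
      v i ≤ Lop r v i a := by
    intro v hv i a
    calc v i = 1 * v i := (one_mul _).symm
    _ ≤ r i a i * v i := mul_le_mul_of_nonneg_right (hdiag i a) (hv i)
    _ ≤ Lop r v i a := Finset.single_le_sum (f := fun j => r i a j * v j)
        (fun j _ => mul_nonneg (hnn i a j) (hv j)) (mem_univ i)
  have hTexp : ∀ (v : S → ℝ), (∀ j, 0 ≤ v j) → ∀ i, v i ≤ Top' r v i :=
    fun v hv i => hle_T v i _ (hLdiag v hv i)
  have hTnonneg : ∀ (v : S → ℝ), (∀ j, 0 ≤ v j) → ∀ i, 0 ≤ Top' r v i :=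
    fun v hv i => (hv i).trans (hTexp v hv i)
  -- the simplex
  set n : ℕ := Fintype.card S with hn
  have hnpos : 0 < (n : ℝ) := by exact_mod_cast Fintype.card_pos
  set Δ : Set (S → ℝ) := {v | (∀ i, 0 ≤ v i) ∧ ∑ i, v i = 1} with hΔdef
  have hΔle1 : ∀ v ∈ Δ, ∀ i, v i ≤ 1 := by
    intro v hv i
    calc v i ≤ ∑ j, v j := Finset.single_le_sum (fun j _ => hv.1 j) (mem_univ i)
    _ = 1 := hv.2
  have hΔclosed : IsClosed Δ := by
    have : Δ = (⋂ i, {v : S → ℝ | 0 ≤ v i}) ∩ {v : S → ℝ | ∑ i, v i = 1} := by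
      ext v; simp [hΔdef, Set.mem_iInter]
    rw [this]
    exact IsClosed.inter
      (isClosed_iInter fun i => isClosed_le continuous_const (continuous_apply i))
      (isClosed_eq (continuous_finset_sum _ fun i _ => continuous_apply i) continuous_const)
  have hΔcompact : IsCompact Δ := by
    refine IsCompact.of_isClosed_subset (isCompact_univ_pi fun _ : S => isCompact_Icc
      (a := (0:ℝ)) (b := 1)) hΔclosed ?_
    intro v hv i _
    exact ⟨hv.1 i, hΔle1 v hv i⟩
  -- the Collatz-Wielandt set
  set E : Set ℝ := {μ | ∃ v ∈ Δ, ∀ i, μ * v i ≤ Top' r v i} with hEdef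
  have huΔ : (fun _ : S => (n : ℝ)⁻¹) ∈ Δ := by
    constructor
    · intro i; positivity
    · rw [Finset.sum_const, Finset.card_univ, ← hn, nsmul_eq_mul]
      field_simp
  have hE1 : (1 : ℝ) ∈ E := by
    refine ⟨fun _ => (n : ℝ)⁻¹, huΔ, fun i => ?_⟩
    rw [one_mul]
    exact hTexp (fun _ => (n : ℝ)⁻¹) (fun j => by positivity) i
  have hEne : E.Nonempty := ⟨1, hE1⟩
  -- upper bound for E
  obtain ⟨a₀⟩ : Nonempty (∀ i, A i) := ⟨fun i => Classical.arbitrary (A i)⟩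
  set C : ℝ := Finset.univ.sup' Finset.univ_nonempty (fun i => ∑ j, r i (a₀ i) j) with hC
  have hTC : ∀ v ∈ Δ, ∀ i, Top' r v i ≤ C := by
    intro v hv i
    calc Top' r v i ≤ Lop r v i (a₀ i) := hT_le v i _
    _ ≤ ∑ j, r i (a₀ i) j := by
        refine Finset.sum_le_sum fun j _ => ?_
        calc r i (a₀ i) j * v j ≤ r i (a₀ i) j * 1 :=
          mul_le_mul_of_nonneg_left (hΔle1 v hv j) (hnn i (a₀ i) j)
        _ = r i (a₀ i) j := mul_one _
    _ ≤ C := Finset.le_sup' (f := fun i => ∑ j, r i (a₀ i) j) (mem_univ i)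
  have hEub : ∀ μ ∈ E, μ ≤ (n : ℝ) * max C 0 := by
    intro μ hμ
    obtain ⟨v, hvΔ, hμv⟩ := hμ
    rcases le_or_gt μ 0 with h0 | h0
    · exact h0.trans (by positivity)
    · obtain ⟨i, hi⟩ : ∃ i, (n : ℝ)⁻¹ ≤ v i := by
        by_contra hcon
        push_neg at hcon
        have : ∑ i, v i < ∑ _i : S, (n : ℝ)⁻¹ :=
          Finset.sum_lt_sum_of_nonempty Finset.univ_nonempty fun i _ => hcon i
        rw [hvΔ.2, Finset.sum_const, Finset.card_univ, ← hn, nsmul_eq_mul] at this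
        rw [mul_inv_cancel₀ (ne_of_gt hnpos)] at this
        exact lt_irrefl _ this
      have h1 : (1 : ℝ) ≤ (n : ℝ) * v i := by
        rw [← mul_inv_cancel₀ (ne_of_gt hnpos)]
        exact mul_le_mul_of_nonneg_left hi (le_of_lt hnpos)
      calc μ = μ * 1 := (mul_one μ).symm
      _ ≤ μ * ((n : ℝ) * v i) := mul_le_mul_of_nonneg_left h1 (le_of_lt h0)
      _ = (n : ℝ) * (μ * v i) := by ring
      _ ≤ (n : ℝ) * C := mul_le_mul_of_nonneg_left ((hμv i).trans (hTC v hvΔ i))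
            (le_of_lt hnpos)
      _ ≤ (n : ℝ) * max C 0 := mul_le_mul_of_nonneg_left (le_max_left _ _) (le_of_lt hnpos)
  have hEbdd : BddAbove E := ⟨_, hEub⟩
  set ρ : ℝ := sSup E with hρdef
  have hρ1 : (1 : ℝ) ≤ ρ := le_csSup hEbdd hE1
  have hρ0 : (0 : ℝ) ≤ ρ := zero_le_one.trans hρ1
  -- the sets Δμ and the eigen-inequality vector
  set Δμ : ℝ → Set (S → ℝ) := fun μ => {v ∈ Δ | ∀ i, μ * v i ≤ Top' r v i} with hΔμdef
  have hΔμiff : ∀ (μ : ℝ) (v : S → ℝ), v ∈ Δμ μ ↔ v ∈ Δ ∧ ∀ i, ∀ a : A i,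
      μ * v i ≤ Lop r v i a := by
    intro μ v
    constructor
    · rintro ⟨h1, h2⟩
      exact ⟨h1, fun i a => (h2 i).trans (hT_le v i a)⟩
    · rintro ⟨h1, h2⟩
      exact ⟨h1, fun i => hle_T v i _ (h2 i)⟩
  have hΔμclosed : ∀ μ : ℝ, IsClosed (Δμ μ) := by
    intro μ
    have : Δμ μ = Δ ∩ ⋂ i, ⋂ a : A i, {v : S → ℝ | μ * v i ≤ Lop r v i a} := by
      ext v
      simp only [Set.mem_inter_iff, Set.mem_iInter, Set.mem_setOf_eq, hΔμiff μ v]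
    rw [this]
    refine hΔclosed.inter (isClosed_iInter fun i => isClosed_iInter fun a => ?_)
    exact isClosed_le (continuous_const.mul (continuous_apply i))
      (continuous_finset_sum _ fun j _ => continuous_const.mul (continuous_apply j))
  have hΔμanti : ∀ {μ μ' : ℝ}, μ ≤ μ' → Δμ μ' ⊆ Δμ μ := by
    intro μ μ' hμμ v hv
    exact ⟨hv.1, fun i => le_trans (mul_le_mul_of_nonneg_right hμμ (hv.1.1 i)) (hv.2 i)⟩
  have hΔμne : ∀ N : ℕ, (Δμ (ρ - 1 / (N + 1))).Nonempty := by
    intro N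
    have hlt : ρ - 1 / (N + 1 : ℝ) < ρ := by
      have : (0 : ℝ) < 1 / (N + 1 : ℝ) := by positivity
      linarith
    obtain ⟨μ, hμE, hμlt⟩ := exists_lt_of_lt_csSup hEne hlt
    obtain ⟨v, hvΔ, hμv⟩ := hμE
    exact ⟨v, (hΔμanti (le_of_lt hμlt)) ⟨hvΔ, hμv⟩⟩
  obtain ⟨v, hvmem⟩ := IsCompact.nonempty_iInter_of_sequence_nonempty_isCompact_isClosed
    (fun N => Δμ (ρ - 1 / (N + 1)))
    (fun N => hΔμanti (by
      have h1 : (1 : ℝ) / (N + 1 + 1) ≤ 1 / (N + 1) := by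
        apply one_div_le_one_div_of_le <;> push_cast <;> linarith
      push_cast
      linarith))
    hΔμne
    (hΔcompact.of_isClosed_subset (hΔμclosed _) (fun v hv => hv.1))
    (fun N => hΔμclosed _)
  simp only [Set.mem_iInter] at hvmem
  have hvΔ : v ∈ Δ := (hvmem 0).1
  have hvnn : ∀ j, 0 ≤ v j := hvΔ.1
  have hvge : ∀ i, ρ * v i ≤ Top' r v i := by
    intro i
    by_contra hcon
    push_neg at hcon
    set ε : ℝ := ρ * v i - Top' r v i with hε
    have hεpos : 0 < ε := by simp [hε]; linarith
    obtain ⟨N, hN⟩ := exists_nat_one_div_lt hεpos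
    have h1 := (hvmem N).2 i
    have h2 : (1 / (N + 1 : ℝ)) * v i ≤ 1 / (N + 1 : ℝ) := by
      calc (1 / (N + 1 : ℝ)) * v i ≤ (1 / (N + 1 : ℝ)) * 1 :=
        mul_le_mul_of_nonneg_left (hΔle1 v hvΔ i) (by positivity)
      _ = 1 / (N + 1 : ℝ) := mul_one _
    have : (ρ - 1 / (N + 1 : ℝ)) * v i = ρ * v i - (1 / (N + 1 : ℝ)) * v i := by ring
    rw [this] at h1
    have : ρ * v i - 1 / (N + 1 : ℝ) ≤ Top' r v i := by linarith
    linarith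
  -- linearity of Lop used for differences
  have hLsub : ∀ (w u : S → ℝ) (s : ℝ) (i : S) (a : A i),
      Lop r (fun j => w j - s * u j) i a = Lop r w i a - s * Lop r u i a := by
    intro w u s i a
    simp [Lop, mul_sub, Finset.sum_sub_distrib, Finset.mul_sum, mul_left_comm]
  -- Step B : the inequality is an equality
  have heq : ∀ i, Top' r v i = ρ * v i := by
    by_contra hne
    push_neg at hne
    obtain ⟨i₀, hi₀⟩ := hne
    have hi₀' : ρ * v i₀ < Top' r v i₀ := lt_of_le_of_ne (hvge i₀) (Ne.symm hi₀)
    -- iterates of the operator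
    set z : ℕ → S → ℝ := fun k => (fun w i => Top' r w i)^[k] v with hzdef
    have hz0 : z 0 = v := rfl
    have hzsucc : ∀ k, z (k + 1) = fun i => Top' r (z k) i := by
      intro k
      simp only [hzdef]
      rw [Function.iterate_succ_apply']
    have hznn : ∀ k j, 0 ≤ z k j := by
      intro k
      induction k with
      | zero => exact hvnn
      | succ k ih => intro j; rw [hzsucc k]; exact hTnonneg (z k) ih j
    have hzge : ∀ k j, ρ * z k j ≤ z (k + 1) j := by
      intro k
      induction k with
      | zero => intro j; rw [hzsucc 0]; exact hvge j
      | succ k ih =>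
        intro j
        rw [hzsucc (k + 1)]
        calc ρ * z (k + 1) j = ρ * Top' r (z k) j := by rw [hzsucc k]
        _ = Top' r (fun j => ρ * z k j) j := (hThom ρ hρ0 (z k) j).symm
        _ ≤ Top' r (z (k + 1)) j := hTmono (fun j' => ih j') j
    -- the strict-inequality sets
    set SS : ℕ → Finset S := fun k => Finset.univ.filter fun i => ρ * z k i < z (k + 1) i
      with hSSdef
    have hSSmem : ∀ k i, i ∈ SS k ↔ ρ * z k i < z (k + 1) i := by
      intro k i; simp [hSSdef]
    have hSS0 : i₀ ∈ SS 0 := by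
      rw [hSSmem, hz0, hzsucc 0]
      exact hi₀'
    -- key difference inequality
    have hdkey : ∀ k i, Lop r (fun j => z (k + 1) j - ρ * z k j) i (sel (z (k + 1)) i) ≤
        z (k + 2) i - ρ * z (k + 1) i := by
      intro k i
      have h1 : z (k + 2) i = Lop r (z (k + 1)) i (sel (z (k + 1)) i) := by
        rw [hzsucc (k + 1)]; exact hT_eq (z (k + 1)) i
      have h2 : ρ * z (k + 1) i ≤ ρ * Lop r (z k) i (sel (z (k + 1)) i) := by
        conv_lhs => rw [hzsucc k]
        exact mul_le_mul_of_nonneg_left (hT_le (z k) i _) hρ0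
      rw [hLsub]
      linarith
    have hdnn : ∀ k j, 0 ≤ z (k + 1) j - ρ * z k j := fun k j => sub_nonneg.mpr (hzge k j)
    have hsingle : ∀ k (i j : S), r i (sel (z (k + 1)) i) j * (z (k + 1) j - ρ * z k j) ≤
        Lop r (fun j => z (k + 1) j - ρ * z k j) i (sel (z (k + 1)) i) := by
      intro k i j
      exact Finset.single_le_sum
        (f := fun j => r i (sel (z (k + 1)) i) j * (z (k + 1) j - ρ * z k j))
        (fun j _ => mul_nonneg (hnn _ _ _) (hdnn k j)) (mem_univ j)
    -- monotonicity of the strict sets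
    have hSSmono : ∀ k, SS k ⊆ SS (k + 1) := by
      intro k i hi
      rw [hSSmem] at hi ⊢
      have h3 := hsingle k i i
      have h4 : z (k + 1) i - ρ * z k i ≤
          r i (sel (z (k + 1)) i) i * (z (k + 1) i - ρ * z k i) :=
        le_mul_of_one_le_left (hdnn k i) (hdiag i _)
      have h5 := hdkey k i
      linarith
    have hSSchain : ∀ k, SS 0 ⊆ SS k := by
      intro k
      induction k with
      | zero => exact subset_rfl
      | succ k ih => exact ih.trans (hSSmono k)
    -- if the strict set is proper it must grow, by irreducibility
    have hstuck : ∀ k, SS k ≠ Finset.univ → SS k ⊂ SS (k + 1) := by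
      intro k hkuniv
      refine (Finset.ssubset_iff_of_subset (hSSmono k)).mpr ?_
      by_contra hcon
      push_neg at hcon
      -- hcon : ∀ x ∈ SS (k+1), x ∈ SS k
      have hZne : ({i | i ∉ SS k} : Set S).Nonempty := by
        by_contra hZ
        rw [Set.not_nonempty_iff_eq_empty] at hZ
        apply hkuniv
        apply Finset.eq_univ_of_forall
        intro i
        by_contra hi
        have : i ∈ ({i | i ∉ SS k} : Set S) := hi
        rw [hZ] at this
        exact this
      have hZcne : (({i | i ∉ SS k} : Set S)ᶜ).Nonempty := by
        refine ⟨i₀, ?_⟩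
        simp only [Set.mem_compl_iff, Set.mem_setOf_eq, not_not]
        exact hSSchain k hSS0
      obtain ⟨i, hiZ, j, hjZ, hrij⟩ := hirr (sel (z (k + 1))) _ hZne hZcne
      simp only [Set.mem_setOf_eq] at hiZ hjZ
      rw [not_not] at hjZ
      -- i is not in SS (k+1) either
      have hinot : i ∉ SS (k + 1) := fun h => hiZ (hcon i h)
      rw [hSSmem] at hinot
      push_neg at hinot
      have h0 : z (k + 2) i - ρ * z (k + 1) i ≤ 0 := sub_nonpos.mpr hinot
      have h1 := hdkey k i
      have h2 := hsingle k i j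
      have h3 : 0 < z (k + 1) j - ρ * z k j := sub_pos.mpr ((hSSmem k j).mp hjZ)
      nlinarith
    -- the strict set fills up in finitely many steps
    have hall : ∃ K, SS K = Finset.univ := by
      by_contra hcon
      push_neg at hcon
      have hcard : ∀ k, k + 1 ≤ (SS k).card := by
        intro k
        induction k with
        | zero => exact Finset.card_pos.mpr ⟨i₀, hSS0⟩
        | succ k ih =>
          have := Finset.card_lt_card (hstuck k (hcon k))
          omega
      have h1 := hcard n
      have h2 : (SS n).card ≤ n := by
        rw [hn]
        exact Finset.card_le_univ _
      omega
    obtain ⟨K, hKuniv⟩ := hall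
    have hKall : ∀ i, ρ * z K i < z (K + 1) i := by
      intro i
      exact (hSSmem K i).mp (hKuniv ▸ mem_univ i)
    -- build a better Collatz-Wielandt value
    set w : S → ℝ := z K with hwdef
    have hvz : ∀ k j, v j ≤ z k j := by
      intro k
      induction k with
      | zero => exact fun j => le_refl _
      | succ k ih =>
        intro j
        calc v j ≤ z k j := ih j
        _ ≤ ρ * z k j := le_mul_of_one_le_left (hznn k j) hρ1
        _ ≤ z (k + 1) j := hzge k j
    have hwnn : ∀ j, 0 ≤ w j := hznn K
    have hsumw : (0 : ℝ) < ∑ j, w j := by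
      have : (1 : ℝ) = ∑ j, v j := hvΔ.2.symm
      have h2 : ∑ j, v j ≤ ∑ j, w j := Finset.sum_le_sum fun j _ => hvz K j
      linarith
    set δ : ℝ := Finset.univ.inf' Finset.univ_nonempty (fun i => z (K + 1) i - ρ * w i)
      with hδdef
    have hδpos : 0 < δ := by
      rw [hδdef, Finset.lt_inf'_iff]
      exact fun i _ => sub_pos.mpr (hKall i)
    set Mw : ℝ := Finset.univ.sup' Finset.univ_nonempty w with hMwdef
    have hMw : ∀ j, w j ≤ Mw := fun j => Finset.le_sup' w (mem_univ j)
    have hMwpos : 0 < Mw := by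
      obtain ⟨i₁, hi₁⟩ : ∃ i₁, 0 < v i₁ := by
        by_contra hcon
        push_neg at hcon
        have : ∀ i, v i = 0 := fun i => le_antisymm (hcon i) (hvnn i)
        have h1 : ∑ j, v j = 0 := Finset.sum_eq_zero fun j _ => this j
        rw [hvΔ.2] at h1
        norm_num at h1
      exact lt_of_lt_of_le (lt_of_lt_of_le hi₁ (hvz K i₁)) (hMw i₁)
    have hμ'w : ∀ i, (ρ + δ / Mw) * w i ≤ Top' r w i := by
      intro i
      have hT : Top' r w i = z (K + 1) i := by rw [hzsucc K]
      have h1 : (δ / Mw) * w i ≤ δ := by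
        calc (δ / Mw) * w i ≤ (δ / Mw) * Mw :=
          mul_le_mul_of_nonneg_left (hMw i) (div_nonneg hδpos.le hMwpos.le)
        _ = δ := div_mul_cancel₀ δ (ne_of_gt hMwpos)
      have h2 : δ ≤ z (K + 1) i - ρ * w i := Finset.inf'_le _ (mem_univ i)
      rw [hT]
      have : (ρ + δ / Mw) * w i = ρ * w i + (δ / Mw) * w i := by ring
      linarith [this.le, this.ge]
    -- normalize and contradict maximality of ρ
    have hμ'E : (ρ + δ / Mw) ∈ E := by
      refine ⟨fun j => (∑ j, w j)⁻¹ * w j, ⟨fun i => mul_nonneg (by positivity) (hwnn i), ?_⟩,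
        fun i => ?_⟩
      · rw [← Finset.mul_sum]
        exact inv_mul_cancel₀ (ne_of_gt hsumw)
      · have h3 : Top' r (fun j => (∑ j, w j)⁻¹ * w j) i = (∑ j, w j)⁻¹ * Top' r w i :=
          hThom _ (by positivity) w i
        rw [h3]
        have h4 : (ρ + δ / Mw) * ((∑ j, w j)⁻¹ * w i) = (∑ j, w j)⁻¹ * ((ρ + δ / Mw) * w i) := by
          ring
        calc (ρ + δ / Mw) * ((∑ j, w j)⁻¹ * w i) = (∑ j, w j)⁻¹ * ((ρ + δ / Mw) * w i) := h4
        _ ≤ (∑ j, w j)⁻¹ * Top' r w i :=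
            mul_le_mul_of_nonneg_left (hμ'w i) (by positivity)
    have hle := le_csSup hEbdd hμ'E
    have : 0 < δ / Mw := by positivity
    linarith
  -- Step A : strict positivity of v
  have hvpos : ∀ i, 0 < v i := by
    by_contra hcon
    push_neg at hcon
    obtain ⟨i₂, hi₂⟩ := hcon
    have hi₂0 : v i₂ = 0 := le_antisymm hi₂ (hvnn i₂)
    have hZne : ({i | v i = 0} : Set S).Nonempty := ⟨i₂, hi₂0⟩
    have hZcne : (({i | v i = 0} : Set S)ᶜ).Nonempty := by
      obtain ⟨i₁, hi₁⟩ : ∃ i₁, 0 < v i₁ := by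
        by_contra hcon'
        push_neg at hcon'
        have hz : ∀ i, v i = 0 := fun i => le_antisymm (hcon' i) (hvnn i)
        have h1 : ∑ j, v j = 0 := Finset.sum_eq_zero fun j _ => hz j
        rw [hvΔ.2] at h1
        norm_num at h1
      refine ⟨i₁, ?_⟩
      simp only [Set.mem_compl_iff, Set.mem_setOf_eq]
      exact ne_of_gt hi₁
    obtain ⟨i, hiZ, j, hjZ, hrij⟩ := hirr (sel v) _ hZne hZcne
    simp only [Set.mem_setOf_eq] at hiZ hjZ
    have hjpos : 0 < v j := lt_of_le_of_ne (hvnn j) (Ne.symm hjZ)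
    have h0 : Top' r v i = 0 := by rw [heq i, hiZ, mul_zero]
    have h1 : 0 < Lop r v i (sel v i) :=
      Finset.sum_pos' (fun j' _ => mul_nonneg (hnn _ _ _) (hvnn j'))
        ⟨j, mem_univ j, mul_pos hrij hjpos⟩
    rw [hT_eq] at h0
    linarith
  exact ⟨ρ, v, sel v, hρ1, hvpos, fun i => ⟨hsel v i, by rw [← hT_eq]; exact heq i⟩⟩

private lemma crossing' {α : Type*} {Z : Set α} (t : ℕ → α) :
    ∀ n : ℕ, t 0 ∈ Z → t n ∉ Z → ∃ k < n, t k ∈ Z ∧ t (k + 1) ∉ Z := by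
  intro n
  induction n with
  | zero => intro h0 hn; exact absurd h0 hn
  | succ n ih =>
    intro h0 hn
    by_cases h : t n ∈ Z
    · exact ⟨n, Nat.lt_succ_self n, h, hn⟩
    · obtain ⟨k, hk, h1, h2⟩ := ih h0 h
      exact ⟨k, Nat.lt_succ_of_lt hk, h1, h2⟩

end Eigen

/-- **Theorem 3.2(a), existence part**: under the CTMDP assumptions (finite state space `S`,
compact metrizable nonempty action sets `A i`, continuous bounded cost and transition rates
with `q(j|i,a) ≥ 0` for `j ≠ i` and `Σ_j q(j|i,a) = 0`, irreducibility, and risk-sensitivity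
coefficient `λ > 0`), there exist `g* ∈ ℝ`, `h : S → ℝ` and a selector `f*` such that for
every `i ∈ S`,
`λ g* e^{λ h(i)} = inf_{a ∈ A(i)} { λ c(i,a) e^{λ h(i)} + Σ_j e^{λ h(j)} q(j|i,a) }`,
the infimum being attained at `a = f*(i)`. -/
theorem stmt0 {S : Type*} [Fintype S] [DecidableEq S] [Nonempty S]
    {A : S → Type*} [∀ i, TopologicalSpace (A i)] [∀ i, CompactSpace (A i)]
    [∀ i, Nonempty (A i)] [∀ i, TopologicalSpace.MetrizableSpace (A i)]
    (lam : ℝ) (hlam : 0 < lam)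
    (q : S → ∀ i : S, A i → ℝ) (c : ∀ i : S, A i → ℝ)
    (hq_nonneg : ∀ (i j : S) (a : A i), j ≠ i → 0 ≤ q j i a)
    (hq_sum : ∀ (i : S) (a : A i), ∑ j, q j i a = 0)
    (hq_cont : ∀ i j : S, Continuous fun a : A i => q j i a)
    (hc_cont : ∀ i : S, Continuous (c i))
    (hirr : ∀ (f : ∀ i, A i) (i j : S), i ≠ j →
      ∃ (m : ℕ) (p : Fin (m + 1) → S), Function.Injective p ∧ p 0 = i ∧
        0 < (∏ k : Fin m, q (p k.succ) (p k.castSucc) (f (p k.castSucc))) *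
              q j (p (Fin.last m)) (f (p (Fin.last m)))) :
    ∃ (gs : ℝ) (h : S → ℝ) (fs : ∀ i, A i), ∀ i : S,
      (lam * gs * Real.exp (lam * h i) =
        ⨅ a : A i, (lam * c i a * Real.exp (lam * h i) +
          ∑ j, Real.exp (lam * h j) * q j i a)) ∧
      lam * c i (fs i) * Real.exp (lam * h i) +
          ∑ j, Real.exp (lam * h j) * q j i (fs i) =
        lam * gs * Real.exp (lam * h i) := by
  classical
  -- choose M making the diagonal coefficients at least 1
  obtain ⟨M, hM⟩ : ∃ M : ℝ, ∀ (i : S) (a : A i), 1 ≤ lam * c i a + q i i a + M := by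
    have h1 : ∀ i : S, ∃ b : A i, ∀ a, lam * c i b + q i i b ≤ lam * c i a + q i i a :=
      fun i => exists_min' ((continuous_const.mul (hc_cont i)).add (hq_cont i i))
    choose b hb using h1
    refine ⟨Finset.univ.sup' Finset.univ_nonempty
      (fun i => 1 - (lam * c i (b i) + q i i (b i))), fun i a => ?_⟩
    have h2 := Finset.le_sup' (fun i => 1 - (lam * c i (b i) + q i i (b i)))
      (Finset.mem_univ i)
    have h3 := hb i a
    linarith
  -- the nonnegative coefficient matrix
  set r : ∀ i : S, A i → S → ℝ :=
    fun i a j => q j i a + (if j = i then lam * c i a + M else 0) with hrdef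
  have hrd : ∀ (i : S) (a : A i), r i a i = q i i a + (lam * c i a + M) := by
    intro i a; simp [hrdef]
  have hro : ∀ (i : S) (a : A i) (j : S), j ≠ i → r i a j = q j i a := by
    intro i a j hj; simp [hrdef, hj]
  have hnn : ∀ (i : S) (a : A i) (j : S), 0 ≤ r i a j := by
    intro i a j
    by_cases hj : j = i
    · subst hj
      rw [hrd]
      have := hM j a
      linarith
    · rw [hro i a j hj]
      exact hq_nonneg i j a hj
  have hdiag : ∀ (i : S) (a : A i), 1 ≤ r i a i := by
    intro i a
    rw [hrd]
    have := hM i a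
    linarith
  have hcont' : ∀ i j : S, Continuous fun a : A i => r i a j := by
    intro i j
    by_cases hj : j = i
    · subst hj
      simp only [hrdef, if_pos rfl]
      exact (hq_cont j j).add ((continuous_const.mul (hc_cont j)).add continuous_const)
    · simp only [hrdef, if_neg hj]
      simpa using hq_cont i j
  -- irreducibility in the form needed
  have hirr' : ∀ (f : ∀ i, A i) (Z : Set S), Z.Nonempty → Zᶜ.Nonempty →
      ∃ i ∈ Z, ∃ j, j ∉ Z ∧ 0 < r i (f i) j := by
    intro f Z ⟨i₀, hi₀⟩ ⟨j₀, hj₀⟩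
    rw [Set.mem_compl_iff] at hj₀
    have hij : i₀ ≠ j₀ := fun h => hj₀ (h ▸ hi₀)
    obtain ⟨m, p, hinj, hp0, hprod⟩ := hirr f i₀ j₀ hij
    -- diagonal entries of q are nonpositive
    have hdq : ∀ (i : S) (a : A i), q i i a ≤ 0 := by
      intro i a
      have h1 := hq_sum i a
      have h2 : ∑ j ∈ Finset.univ.erase i, q j i a + q i i a = ∑ j, q j i a :=
        Finset.sum_erase_add _ _ (Finset.mem_univ i)
      have h3 : 0 ≤ ∑ j ∈ Finset.univ.erase i, q j i a :=
        Finset.sum_nonneg fun j hj => hq_nonneg i j a (Finset.ne_of_mem_erase hj)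
      linarith
    -- all factors along the path are positive
    have hPnn : 0 ≤ ∏ k : Fin m, q (p k.succ) (p k.castSucc) (f (p k.castSucc)) := by
      refine Finset.prod_nonneg fun k _ => hq_nonneg _ _ _ fun hcon => ?_
      have := hinj hcon
      simp only [Fin.ext_iff, Fin.val_succ, Fin.coe_castSucc] at this
      omega
    have hPpos : 0 < ∏ k : Fin m, q (p k.succ) (p k.castSucc) (f (p k.castSucc)) := by
      rcases lt_or_eq_of_le hPnn with h | h
      · exact h
      · rw [← h] at hprod
        simp at hprod
    have hLpos : 0 < q j₀ (p (Fin.last m)) (f (p (Fin.last m))) := by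
      by_contra hcon
      push_neg at hcon
      have := mul_nonpos_of_nonneg_of_nonpos hPnn hcon
      linarith
    have hfac : ∀ k : Fin m, 0 < q (p k.succ) (p k.castSucc) (f (p k.castSucc)) := by
      intro k
      by_contra hcon
      push_neg at hcon
      have h0 : q (p k.succ) (p k.castSucc) (f (p k.castSucc)) = 0 :=
        le_antisymm hcon (hq_nonneg _ _ _ fun hcc => by
          have := hinj hcc
          simp only [Fin.ext_iff, Fin.val_succ, Fin.coe_castSucc] at this
          omega)
      have : (∏ k : Fin m, q (p k.succ) (p k.castSucc) (f (p k.castSucc))) = 0 :=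
        Finset.prod_eq_zero (Finset.mem_univ k) h0
      rw [this] at hPpos
      exact lt_irrefl _ hPpos
    -- the walk as a function on ℕ
    set t : ℕ → S := fun k => if h : k < m + 1 then p ⟨k, h⟩ else j₀ with htdef
    have ht : ∀ k (h : k < m + 1), t k = p ⟨k, h⟩ := by
      intro k h; simp [htdef, h, Nat.lt_succ_iff.mp h]
    have ht0 : t 0 = i₀ := by
      rw [ht 0 (Nat.succ_pos m)]
      exact hp0
    have htl : t (m + 1) = j₀ := by
      simp [htdef]
    have hstep : ∀ k, k < m + 1 → 0 < q (t (k + 1)) (t k) (f (t k)) := by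
      intro k hk
      rcases Nat.lt_or_ge k m with hkm | hkm
      · rw [ht k (by omega), ht (k + 1) (by omega)]
        have := hfac ⟨k, hkm⟩
        have e1 : (⟨k, hkm⟩ : Fin m).succ = ⟨k + 1, by omega⟩ := rfl
        have e2 : (⟨k, hkm⟩ : Fin m).castSucc = ⟨k, by omega⟩ := rfl
        rwa [e1, e2] at this
      · have hkm' : k = m := by omega
        subst hkm'
        rw [ht k (by omega), htl]
        have e3 : (⟨k, by omega⟩ : Fin (k + 1)) = Fin.last k := rfl
        rw [e3]
        exact hLpos
    obtain ⟨k, hkm, hkZ, hk1Z⟩ := crossing' t (m + 1) (ht0 ▸ hi₀) (htl ▸ hj₀)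
    refine ⟨t k, hkZ, t (k + 1), hk1Z, ?_⟩
    have hne : t (k + 1) ≠ t k := fun h => hk1Z (h ▸ hkZ)
    rw [hro _ _ _ hne]
    exact hstep k hkm
  -- apply the eigenvector theorem
  obtain ⟨ρ, v, fs, hρ, hv, hfs⟩ := exists_eigen r hcont' hnn hdiag hirr'
  refine ⟨(ρ - M) / lam, fun j => Real.log (v j) / lam, fs, fun i => ?_⟩
  have hexp : ∀ j : S, Real.exp (lam * (Real.log (v j) / lam)) = v j := by
    intro j
    rw [mul_comm, div_mul_cancel₀ _ (ne_of_gt hlam), Real.exp_log (hv j)]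
  have hlg : lam * ((ρ - M) / lam) = ρ - M := by
    field_simp
  have hkey : ∀ a : A i, lam * c i a * v i + ∑ j, v j * q j i a = Lop r v i a - M * v i := by
    intro a
    have h1 : ∀ j : S, r i a j * v j =
        q j i a * v j + (if j = i then (lam * c i a + M) * v j else 0) := by
      intro j
      by_cases hj : j = i
      · subst hj
        rw [hrd, if_pos rfl]
        ring
      · rw [hro i a j hj, if_neg hj, add_zero]
    rw [Lop, Finset.sum_congr rfl fun j _ => h1 j, Finset.sum_add_distrib,
      Finset.sum_ite_eq' Finset.univ i (fun j => (lam * c i a + M) * v j)]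
    simp only [Finset.mem_univ, if_true]
    have h2 : ∑ j, q j i a * v j = ∑ j, v j * q j i a :=
      Finset.sum_congr rfl fun j _ => mul_comm _ _
    rw [h2]
    ring
  simp only [hexp]
  have hmin : ∀ a : A i, lam * c i (fs i) * v i + ∑ j, v j * q j i (fs i) ≤
      lam * c i a * v i + ∑ j, v j * q j i a := by
    intro a
    rw [hkey, hkey]
    have := (hfs i).1 a
    linarith
  have hval : lam * c i (fs i) * v i + ∑ j, v j * q j i (fs i) = (ρ - M) * v i := by
    rw [hkey, (hfs i).2]
    ring
  constructor
  · have hiInf : (⨅ a : A i, (lam * c i a * v i + ∑ j, v j * q j i a)) = (ρ - M) * v i := by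
      refine le_antisymm ?_ ?_
      · exact (ciInf_le ⟨_, by rintro x ⟨a, rfl⟩; exact hmin a⟩ (fs i)).trans hval.le
      · exact le_ciInf fun a => hval ▸ hmin a
    rw [hiInf, hlg]
  · rw [hval, hlg]
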